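/- For every reflection s ∈ T and all a ∈ ⋀V, b ∈ A, one has ∇_s(a ⊗ b) = (α_s ∧ s(a)) ⊗ ((1−s)(b)/α_s). -/
import Mathlib


open scoped TensorProduct
noncomputable section

abbrev Vc (r : ℕ) := Fin r → ℂ
abbrev Pc (r : ℕ) := MvPolynomial (Fin r) ℂ
abbrev Ec (r : ℕ) := ExteriorAlgebra ℂ (Vc r)
abbrev Wc (r : ℕ) := Ec r ⊗[ℂ] Pc r

variable {r : ℕ}

/-- The standard symmetric bilinear form on `ℂ^r`. -/
def bil (x y : Vc r) : ℂ := ∑ i, x i * y i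

/-- A vector of `ℂ^r` viewed as a degree-one polynomial. -/
def linP (v : Vc r) : Pc r := ∑ i, MvPolynomial.C (v i) * MvPolynomial.X i

/-- The action of a linear automorphism of `V` on polynomials (i.e. on `S(V)`). -/
def pAct (g : Vc r ≃ₗ[ℂ] Vc r) : Pc r →ₐ[ℂ] Pc r :=
  MvPolynomial.aeval fun i => linP (g (Pi.single i 1))

/-- The action of a linear automorphism of `V` on the exterior algebra of `V`. -/
def eAct (g : Vc r ≃ₗ[ℂ] Vc r) : Ec r →ₐ[ℂ] Ec r :=
  ExteriorAlgebra.map (g : Vc r →ₗ[ℂ] Vc r)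

/-- The diagonal action of a linear automorphism of `V` on the Weil algebra `⋀V ⊗ S(V)`. -/
def wAct (g : Vc r ≃ₗ[ℂ] Vc r) : Wc r →ₐ[ℂ] Wc r :=
  Algebra.TensorProduct.map (eAct g) (pAct g)

/-- A vector of `V` viewed inside the exterior algebra. -/
def exti (v : Vc r) : Ec r := ExteriorAlgebra.ι ℂ v

/-- The de Rham differential on the Weil algebra: `d(q ⊗ k) = ∑ᵢ (xᵢ ∧ q) ⊗ ∂k/∂xᵢ`. -/
def deRham : Wc r →ₗ[ℂ] Wc r :=
  ∑ i, TensorProduct.map (LinearMap.mulLeft ℂ (exti (Pi.single i 1))) ((MvPolynomial.pderiv i).toLinearMap)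

/-- The directional derivative `∂_v`. -/
def dirDeriv (v : Vc r) : Pc r →ₗ[ℂ] Pc r := ∑ i, v i • (MvPolynomial.pderiv i).toLinearMap

/-- `g` is a reflection with root `a`, with respect to the standard bilinear form. -/
def IsReflRoot (g : Vc r ≃ₗ[ℂ] Vc r) (a : Vc r) : Prop :=
  a ≠ 0 ∧ g a = -a ∧ ∀ v, bil a v = 0 → g v = v

/-- The relation whose associated two-sided ideal is `𝒲J`, the ideal generated by the `ψᵢ`. -/
def relJ (ψ : Fin r → Pc r) : Wc r → Wc r → Prop :=
  fun x y => (∃ i, x = (1 : Ec r) ⊗ₜ[ℂ] ψ i) ∧ y = 0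

/-- `B = ⋀V ⊗ H = 𝒲/𝒲J`. -/
abbrev Bc (ψ : Fin r → Pc r) := RingQuot (relJ ψ)

/-- The quotient map `π : 𝒲 → B`. -/
def πB (ψ : Fin r → Pc r) : Wc r →ₐ[ℂ] Bc ψ := RingQuot.mkAlgHom ℂ (relJ ψ)

/-- The Solomon elements `pᵢ = π(d(1 ⊗ ψᵢ))`. -/
def pSol (ψ : Fin r → Pc r) (i : Fin r) : Bc ψ := πB ψ (deRham ((1 : Ec r) ⊗ₜ[ℂ] ψ i))

/-- The covariants `fᵢ(v) = π(1 ⊗ ∂_v ψᵢ)`. -/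
def fcov (ψ : Fin r → Pc r) (i : Fin r) (v : Vc r) : Bc ψ :=
  πB ψ ((1 : Ec r) ⊗ₜ[ℂ] dirDeriv v (ψ i))

/-- The `B`-valued pairing `E(φ, χ) = ∑ᵢ φ(xᵢ)·χ(xᵢ)` on maps `V → B`. -/
def Eform (ψ : Fin r → Pc r) (φ χ : Vc r → Bc ψ) : Bc ψ :=
  ∑ i, φ (Pi.single i 1) * χ (Pi.single i 1)


/-- The covariants `uᵢ = (r/(2|T|))·D∘fᵢ`, where `D` (given here as the operator `DB` on `B`
induced by `D = ∑_{s ∈ T} ∇ₛ`) is the Dunkl differential with `c = 1`. -/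
def ucov (ψ : Fin r → Pc r) (T : Finset (Vc r ≃ₗ[ℂ] Vc r)) (DB : Bc ψ →ₗ[ℂ] Bc ψ)
    (i : Fin r) (v : Vc r) : Bc ψ :=
  ((r : ℂ) / (2 * T.card)) • DB (fcov ψ i v)


-- aux lemmas
lemma linP_ne_zero {w : Vc r} (hw : w ≠ 0) : linP w ≠ 0 := by
  intro h
  apply hw
  funext i
  have := congrArg (MvPolynomial.eval (Pi.single i 1)) h
  simp [linP, MvPolynomial.eval_sum, Pi.single_apply] at this
  exact this

lemma exti_anticomm (u v : Vc r) : exti u * exti v = -(exti v * exti u) := by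
  have := ExteriorAlgebra.ι_add_mul_swap (R := ℂ) u v
  unfold exti
  exact eq_neg_of_add_eq_zero_left this

lemma extiw_comm (w : Vc r) (a : Ec r) : ∃ a', exti w * a = a' * exti w := by
  induction a using ExteriorAlgebra.induction with
  | algebraMap c => exact ⟨algebraMap ℂ _ c, (Algebra.commutes c _).symm⟩
  | ι v => exact ⟨-exti v, by show exti w * exti v = -exti v * exti w; rw [exti_anticomm w v, neg_mul]⟩
  | mul a b ha hb =>
    obtain ⟨a', ha⟩ := ha; obtain ⟨b', hb⟩ := hb
    exact ⟨a' * b', by rw [← mul_assoc, ha, mul_assoc, hb, mul_assoc]⟩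
  | add a b ha hb =>
    obtain ⟨a', ha⟩ := ha; obtain ⟨b', hb⟩ := hb
    exact ⟨a' + b', by rw [mul_add, ha, hb, add_mul]⟩

lemma key_S (s : Vc r ≃ₗ[ℂ] Vc r) (w : Vc r)
    (hs : ∀ v, ∃ c : ℂ, s v = v + c • w) (a : Ec r) :
    ∀ y : Ec r, y * exti w * eAct s a = y * exti w * a := by
  induction a using ExteriorAlgebra.induction with
  | algebraMap c => intro y; simp [eAct]
  | ι v =>
    intro y
    obtain ⟨c, hc⟩ := hs v
    show y * exti w * eAct s (exti v) = y * exti w * exti v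
    have : eAct s (exti v) = exti v + c • exti w := by
      simp [eAct, exti, ExteriorAlgebra.map_apply_ι, hc, map_add, map_smul]
    have hz : exti w * exti w = 0 := ExteriorAlgebra.ι_sq_zero w
    rw [this, mul_add, mul_smul_comm, mul_assoc y (exti w) (exti w), hz]
    simp
  | mul a b ha hb =>
    intro y
    rw [map_mul, ← mul_assoc, ha y]
    obtain ⟨a', haa⟩ := extiw_comm w a
    have h1 : y * exti w * a = (y * a') * exti w := by
      rw [mul_assoc, haa, ← mul_assoc]
    rw [h1, hb (y * a'), ← h1]
    rw [mul_assoc]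
  | add a b ha hb =>
    intro y
    rw [map_add, mul_add, ha y, hb y, mul_add]

set_option maxHeartbeats 1600000 in
/-- formula (2.5) of De Concini–Papi.
For every reflection `s ∈ T` and all `a ∈ ⋀V`, `b ∈ A`, one has
`∇ₛ(a ⊗ b) = (αₛ ∧ s(a)) ⊗ ((1−s)(b)/αₛ)`, where `(1−s)(b)/αₛ` is the (unique) polynomial
`q` with `αₛ·q = b − s(b)`. -/
theorem statement5
    -- `W` is a finite irreducible reflection group on `V = ℂ^r` (complexified euclidean space),
    (W : Subgroup (Vc r ≃ₗ[ℂ] Vc r))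
    (hWfin : Finite W)
    (hWorth : ∀ g ∈ W, ∀ x y, bil (g x) (g y) = bil x y)
    (hWirr : ∀ p : Submodule ℂ (Vc r), (∀ g ∈ W, ∀ v ∈ p, g v ∈ p) → p = ⊥ ∨ p = ⊤)
    -- `T` is the set of reflections of `W`, generating `W`, with roots `α s`,
    (T : Finset (Vc r ≃ₗ[ℂ] Vc r))
    (hT : ∀ g, g ∈ T ↔ g ∈ W ∧ ∃ a, IsReflRoot g a)
    (hWgen : Subgroup.closure (T : Set _) = W)
    (α : (Vc r ≃ₗ[ℂ] Vc r) → Vc r)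
    (hα : ∀ s ∈ T, IsReflRoot s (α s))
    -- `nab s` is the operator `∇ₛ = (αₛ ⊗ 1)·(1−s)/αₛ` on the Weil algebra, characterized by
    -- `(1 ⊗ αₛ) · ∇ₛ(ω) = (αₛ ⊗ 1) · (ω − s·ω)` (multiplication by `1 ⊗ αₛ` is injective),
    (nab : (Vc r ≃ₗ[ℂ] Vc r) → Wc r →ₗ[ℂ] Wc r)
    (hnab : ∀ s ∈ T, ∀ ω, ((1 : Ec r) ⊗ₜ[ℂ] linP (α s)) * nab s ω
        = ((exti (α s)) ⊗ₜ[ℂ] (1 : Pc r)) * (ω - wAct s ω)) :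
    ∀ s ∈ T, ∀ (a : Ec r) (b q : Pc r),
      linP (α s) * q = b - pAct s b →
      nab s (a ⊗ₜ[ℂ] b) = (exti (α s) * eAct s a) ⊗ₜ[ℂ] q := by
  intro s hsT a b q hq
  obtain ⟨hw0, hsw, hfix⟩ := hα s hsT
  set w := α s with hwdef
  set p := linP w with hpdef
  -- bil w w ≠ 0
  have hbil : bil w w ≠ 0 := by
    intro h
    have := hfix w h
    rw [hsw] at this
    have h2 : (2 : ℂ) • w = 0 := by
      rw [two_smul]; nth_rewrite 1 [← this]; abel
    rcases smul_eq_zero.mp h2 with h | h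
    · norm_num at h
    · exact hw0 h
  -- bil bilinearity facts needed
  have bil_smul : ∀ (c : ℂ) (x y : Vc r), bil x (c • y) = c * bil x y := by
    intro c x y
    unfold bil
    rw [Finset.mul_sum]
    exact Finset.sum_congr rfl fun i _ => by simp; ring
  have bil_sub : ∀ (x y z : Vc r), bil x (y - z) = bil x y - bil x z := by
    intro x y z
    unfold bil
    rw [← Finset.sum_sub_distrib]
    exact Finset.sum_congr rfl fun i _ => by simp; ring
  have hs : ∀ v, ∃ c : ℂ, s v = v + c • w := by
    intro v
    set c := bil w v / bil w w with hc
    have horth : bil w (v - c • w) = 0 := by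
      rw [bil_sub, bil_smul, hc, div_mul_cancel₀ _ hbil, sub_self]
    have := hfix _ horth
    refine ⟨-2 * c, ?_⟩
    have hsv : s v = s (v - c • w) + c • s w := by
      rw [map_sub, map_smul]; abel
    rw [hsv, this, hsw]
    module
  have hkey : exti w * eAct s a = exti w * a := by
    have := key_S s w hs a 1
    simpa using this
  -- injectivity of multiplication by 1 ⊗ p
  have hp : p ≠ 0 := linP_ne_zero hw0
  have hmulinj : Function.Injective (fun x : Pc r => p * x) :=
    fun x y h => mul_left_cancel₀ hp h
  have hinj : Function.Injective
      (LinearMap.lTensor (Ec r) (LinearMap.mulLeft ℂ p)) :=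
    Module.Flat.lTensor_preserves_injective_linearMap _ hmulinj
  have hform : ∀ x : Wc r, ((1 : Ec r) ⊗ₜ[ℂ] p) * x
      = LinearMap.lTensor (Ec r) (LinearMap.mulLeft ℂ p) x := by
    intro x
    induction x using TensorProduct.induction_on with
    | zero => simp
    | tmul a b => simp [Algebra.TensorProduct.tmul_mul_tmul]
    | add x y hx hy => rw [mul_add, map_add, hx, hy]
  have main : ((1 : Ec r) ⊗ₜ[ℂ] p) * nab s (a ⊗ₜ[ℂ] b)
      = ((1 : Ec r) ⊗ₜ[ℂ] p) * ((exti w * eAct s a) ⊗ₜ[ℂ] q) := by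
    rw [hnab s hsT]
    have hwact : wAct s (a ⊗ₜ[ℂ] b) = eAct s a ⊗ₜ[ℂ] pAct s b :=
      Algebra.TensorProduct.map_tmul _ _ _ _
    rw [hwact, mul_sub, Algebra.TensorProduct.tmul_mul_tmul,
      Algebra.TensorProduct.tmul_mul_tmul, Algebra.TensorProduct.tmul_mul_tmul]
    simp only [one_mul, mul_one]
    rw [← hwdef, hkey, ← TensorProduct.tmul_sub, ← hq]
  exact hinj (by rw [← hform, ← hform]; exact main)
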